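/- If R is a G-graded NR-clean ring, then the identity component R_e is an NR-clean ring. -/

import Mathlib

lemma eq_zero_of_mem_ne {G : Type*} [DecidableEq G] {R : Type*} [Ring R]
    (𝒜 : G → AddSubgroup R) (hI : DirectSum.IsInternal 𝒜)
    {g h : G} (hgh : g ≠ h) {x : R} (hg : x ∈ 𝒜 g) (hh : x ∈ 𝒜 h) : x = 0 := by
  have := hI.injective (a₁ := DirectSum.of (fun i => 𝒜 i) g ⟨x, hg⟩)
    (a₂ := DirectSum.of (fun i => 𝒜 i) h ⟨x, hh⟩) (by simp)
  have h2 := congrFun (congrArg DFunLike.coe this) g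
  rw [DirectSum.of_eq_same, DirectSum.of_eq_of_ne _ _ _ hgh] at h2
  exact congrArg Subtype.val h2

lemma pair_zero {G : Type*} [DecidableEq G] {R : Type*} [Ring R]
    (𝒜 : G → AddSubgroup R) (hI : DirectSum.IsInternal 𝒜)
    {k g h : G} (hkg : k ≠ g) (hkh : k ≠ h) (hgh : g ≠ h)
    {a r n : R} (ha : a ∈ 𝒜 k) (hr : r ∈ 𝒜 g) (hn : n ∈ 𝒜 h)
    (heq : a = r + n) : r = 0 ∧ n = 0 := by
  have key : DirectSum.of (fun i => 𝒜 i) k ⟨a, ha⟩ =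
      DirectSum.of (fun i => 𝒜 i) g ⟨r, hr⟩ + DirectSum.of (fun i => 𝒜 i) h ⟨n, hn⟩ :=
    hI.injective (by simp [heq])
  constructor
  · have h2 := congrFun (congrArg DFunLike.coe key) g
    rw [DirectSum.add_apply, DirectSum.of_eq_same, DirectSum.of_eq_of_ne _ _ _ hkg.symm,
      DirectSum.of_eq_of_ne _ _ _ hgh, add_zero] at h2
    exact (congrArg Subtype.val h2).symm
  · have h2 := congrFun (congrArg DFunLike.coe key) h
    rw [DirectSum.add_apply, DirectSum.of_eq_same, DirectSum.of_eq_of_ne _ _ _ hkh.symm,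
      DirectSum.of_eq_of_ne _ _ _ hgh.symm, zero_add] at h2
    exact (congrArg Subtype.val h2).symm


/-- An element is homogeneous w.r.t. a grading family `𝒜` if it lies in some component. -/
def Homogeneous {G : Type*} [Group G] {R : Type*} [Ring R]
    (𝒜 : G → AddSubgroup R) (x : R) : Prop := ∃ g, x ∈ 𝒜 g

/-- A graded-regular element: homogeneous `r` with `r = r * a * r` for some homogeneous `a`. -/
def GradedRegular {G : Type*} [Group G] {R : Type*} [Ring R]
    (𝒜 : G → AddSubgroup R) (r : R) : Prop :=
  Homogeneous 𝒜 r ∧ ∃ a : R, Homogeneous 𝒜 a ∧ r = r * a * r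

/-- Graded NR-clean: every homogeneous element is a sum of a graded-regular element
and a homogeneous nilpotent element. -/
def GradedNRClean {G : Type*} [Group G] {R : Type*} [Ring R]
    (𝒜 : G → AddSubgroup R) : Prop :=
  ∀ x : R, Homogeneous 𝒜 x →
    ∃ r n : R, GradedRegular 𝒜 r ∧ Homogeneous 𝒜 n ∧ IsNilpotent n ∧ x = r + n

/-- `𝒜` is a `G`-grading of the ring `R`. -/
structure IsGrading {G : Type*} [Group G] [DecidableEq G] {R : Type*} [Ring R]
    (𝒜 : G → AddSubgroup R) : Prop where
  one_mem : (1 : R) ∈ 𝒜 1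
  mul_mem : ∀ {g h : G} {a b : R}, a ∈ 𝒜 g → b ∈ 𝒜 h → a * b ∈ 𝒜 (g * h)
  isInternal : DirectSum.IsInternal 𝒜

/-- If `R` is a `G`-graded NR-clean ring, then the identity component `R_e`
is an NR-clean ring (regular and nilpotent witnesses lying in `R_e`, with the regularity
witness in `R_e` as well). -/
theorem stmt0 {G : Type*} [Group G] [DecidableEq G] {R : Type*} [Ring R]
    (𝒜 : G → AddSubgroup R) (hG : IsGrading 𝒜) (h : GradedNRClean 𝒜) :
    ∀ a ∈ 𝒜 1, ∃ r n : R, r ∈ 𝒜 1 ∧ n ∈ 𝒜 1 ∧ (∃ x ∈ 𝒜 1, r = r * x * r) ∧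
      IsNilpotent n ∧ a = r + n := by
  intro a ha
  obtain ⟨r, n, ⟨⟨g, hrg⟩, a', ⟨g', ha'⟩, hreg⟩, ⟨hh, hnh⟩, hnil, heq⟩ := h a ⟨1, ha⟩
  by_cases hg : g = 1
  · subst hg
    have hn1 : n ∈ 𝒜 1 := by
      have : n = a - r := by rw [heq]; abel
      rw [this]; exact sub_mem ha hrg
    by_cases hg' : g' = 1
    · subst hg'
      exact ⟨r, n, hrg, hn1, ⟨a', ha', hreg⟩, hnil, heq⟩
    · -- r ∈ 𝒜 1 ∩ 𝒜 g' (via r = r*a'*r), with g' ≠ 1 ⇒ r = 0... careful: r*a'*r ∈ 𝒜 g'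
      have hrg' : r ∈ 𝒜 g' := by
        rw [hreg]
        have := hG.mul_mem (hG.mul_mem hrg ha') hrg
        simpa using this
      have hr0 : r = 0 := eq_zero_of_mem_ne 𝒜 hG.isInternal hg' hrg' hrg
      exact ⟨r, n, hrg, hn1, ⟨0, (𝒜 1).zero_mem, by simp [hr0]⟩, hnil, heq⟩
  · by_cases hh1 : hh = 1
    · subst hh1
      have hr1 : r ∈ 𝒜 1 := by
        have : r = a - n := by rw [heq]; abel
        rw [this]; exact sub_mem ha hnh
      have hr0 : r = 0 := eq_zero_of_mem_ne 𝒜 hG.isInternal (Ne.symm hg) hr1 hrg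
      exact ⟨0, n, (𝒜 1).zero_mem, hnh, ⟨0, (𝒜 1).zero_mem, by simp⟩, hnil,
        by rw [heq, hr0]⟩
    · by_cases hgh : g = hh
      · subst hgh
        have : a ∈ 𝒜 g := heq ▸ add_mem hrg hnh
        have ha0 : a = 0 := eq_zero_of_mem_ne 𝒜 hG.isInternal (fun e => hg e.symm) ha this
        exact ⟨0, 0, (𝒜 1).zero_mem, (𝒜 1).zero_mem, ⟨0, (𝒜 1).zero_mem, by simp⟩,
          ⟨1, by simp⟩, by simp [ha0]⟩
      · obtain ⟨hr0, hn0⟩ := pair_zero 𝒜 hG.isInternal (fun e => hg e.symm)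
          (fun e => hh1 e.symm) hgh ha hrg hnh heq
        exact ⟨0, 0, (𝒜 1).zero_mem, (𝒜 1).zero_mem, ⟨0, (𝒜 1).zero_mem, by simp⟩,
          ⟨1, by simp⟩, by simp [heq, hr0, hn0]⟩
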